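/- Let f = a₀ + a₁x + ⋯ + aₙxⁿ ∈ ℤ[x] be a primitive polynomial. If for a prime p and positive integers k and n one has gcd(k,n) = 1, pᵏ divides each of a₀, a₁, …, a_{n−1}, p does not divide aₙ, and p^{k+1} does not divide a₀, then f is irreducible in ℤ[x]. -/

import Mathlib

open Polynomial Finset

private lemma exists_min_idx (s : Finset ℕ) (hs : s.Nonempty) (val : ℕ → ℕ) :
    ∃ i ∈ s, (∀ j ∈ s, val i ≤ val j) ∧ ∀ j ∈ s, j < i → val i < val j := by
  obtain ⟨m, hm, hmin⟩ := s.exists_min_image val hs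
  set t := s.filter (fun j => val j = val m) with ht
  have htne : t.Nonempty := ⟨m, by simp [ht, hm]⟩
  have hmem := Finset.mem_filter.mp (t.min'_mem htne)
  refine ⟨t.min' htne, hmem.1, ?_, ?_⟩
  · intro j hj; rw [hmem.2]; exact hmin j hj
  · intro j hj hlt
    rcases lt_or_eq_of_le (hmin j hj) with h | h
    · rw [hmem.2]; exact h
    · exact absurd (t.min'_le j (Finset.mem_filter.mpr ⟨hj, h.symm⟩)) (not_le.mpr hlt)

set_option maxHeartbeats 1000000 in
theorem stmt4 (f : Polynomial ℤ) (p k : ℕ) (hp : p.Prime) (hk : 0 < k)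
    (hn : 0 < f.natDegree)
    (hprim : f.IsPrimitive)
    (hgcd : Nat.gcd k f.natDegree = 1)
    (hdvd : ∀ i < f.natDegree, (p : ℤ) ^ k ∣ f.coeff i)
    (hlead : ¬ (p : ℤ) ∣ f.coeff f.natDegree)
    (h0 : ¬ (p : ℤ) ^ (k + 1) ∣ f.coeff 0) :
    Irreducible f := by
  haveI : Fact p.Prime := ⟨hp⟩
  set n := f.natDegree with hn'
  have hf0 : f ≠ 0 := fun hc => by rw [hn', hc, natDegree_zero] at hn; exact lt_irrefl 0 hn
  -- basic valuation facts
  set v : ℤ → ℕ := padicValInt p with hv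
  have hdvd_iff : ∀ (c : ℤ) (m : ℕ), c ≠ 0 → ((p : ℤ) ^ m ∣ c ↔ m ≤ v c) := by
    intro c m hc
    rw [padicValInt_dvd_iff]
    exact ⟨fun h => h.resolve_left hc, Or.inr⟩
  constructor
  · exact not_isUnit_of_natDegree_pos f hn
  intro g h hf
  by_contra hcon
  push_neg at hcon
  obtain ⟨hgu, hhu⟩ := hcon
  have hg0 : g ≠ 0 := by rintro rfl; simp at hf; exact hf0 hf
  have hh0 : h ≠ 0 := by rintro rfl; simp at hf; exact hf0 hf
  set d := g.natDegree with hd'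
  set e := h.natDegree with he'
  have hde : d + e = n := by rw [hn', hf, natDegree_mul hg0 hh0]
  -- nonconstant factors
  have hdpos : 0 < d := by
    rcases (Nat.eq_zero_or_pos d).symm with h1 | h1
    · exact h1
    · exfalso
      apply hgu
      have hg' : g = C (g.coeff 0) := Polynomial.eq_C_of_natDegree_eq_zero h1
      have hCd : C (g.coeff 0) ∣ f := by rw [← hg']; exact ⟨h, hf⟩
      rw [hg']
      exact isUnit_C.mpr (hprim _ hCd)
  have hepos : 0 < e := by
    rcases (Nat.eq_zero_or_pos e).symm with h1 | h1
    · exact h1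
    · exfalso
      apply hhu
      have hh' : h = C (h.coeff 0) := Polynomial.eq_C_of_natDegree_eq_zero h1
      have hCd : C (h.coeff 0) ∣ f := by rw [← hh']; exact ⟨g, by rw [hf, mul_comm]⟩
      rw [hh']
      exact isUnit_C.mpr (hprim _ hCd)
  -- leading coefficients not divisible by p
  have hleadf : f.coeff n = g.leadingCoeff * h.leadingCoeff := by
    rw [hn', hf, ← leadingCoeff, leadingCoeff_mul]
  have hpg : ¬ (p : ℤ) ∣ g.leadingCoeff := fun hc => hlead (hleadf ▸ hc.mul_right _)
  have hph : ¬ (p : ℤ) ∣ h.leadingCoeff := fun hc => hlead (hleadf ▸ hc.mul_left _)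
  have hvg : v g.leadingCoeff = 0 := by
    by_contra hc
    exact hpg (by
      have := (hdvd_iff g.leadingCoeff 1 (leadingCoeff_ne_zero.mpr hg0)).mpr
        (Nat.one_le_iff_ne_zero.mpr hc)
      simpa using this)
  have hvh : v h.leadingCoeff = 0 := by
    by_contra hc
    exact hph (by
      have := (hdvd_iff h.leadingCoeff 1 (leadingCoeff_ne_zero.mpr hh0)).mpr
        (Nat.one_le_iff_ne_zero.mpr hc)
      simpa using this)
  -- constant coefficients nonzero
  have ha0 : f.coeff 0 ≠ 0 := fun hc => h0 (hc ▸ dvd_zero _)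
  have ha0' : f.coeff 0 = g.coeff 0 * h.coeff 0 := by rw [hf, mul_coeff_zero]
  have hg00 : g.coeff 0 ≠ 0 := fun hc => ha0 (by rw [ha0', hc, zero_mul])
  have hh00 : h.coeff 0 ≠ 0 := fun hc => ha0 (by rw [ha0', hc, mul_zero])
  -- minimal-value minimal indices
  set valg : ℕ → ℕ := fun i => n * v (g.coeff i) + k * i with hvalg
  set valh : ℕ → ℕ := fun j => n * v (h.coeff j) + k * j with hvalh
  obtain ⟨i₀, hi₀s, hi₀min, hi₀str⟩ :=
    exists_min_idx g.support (support_nonempty.mpr hg0) valg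
  obtain ⟨j₀, hj₀s, hj₀min, hj₀str⟩ :=
    exists_min_idx h.support (support_nonempty.mpr hh0) valh
  set r := i₀ + j₀ with hr
  set M := v (g.coeff i₀) + v (h.coeff j₀) with hM
  have hgi₀ : g.coeff i₀ ≠ 0 := mem_support_iff.mp hi₀s
  have hhj₀ : h.coeff j₀ ≠ 0 := mem_support_iff.mp hj₀s
  have hnpos : 0 < n := hn
  -- exact valuation of the product's r-th coefficient
  have hmulM : v (g.coeff i₀ * h.coeff j₀) = M := padicValInt.mul hgi₀ hhj₀
  have hmain_ndvd : ¬ (p : ℤ) ^ (M + 1) ∣ g.coeff i₀ * h.coeff j₀ := by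
    rw [hdvd_iff _ _ (mul_ne_zero hgi₀ hhj₀), hmulM]
    omega
  have hterm : ∀ x : ℕ × ℕ, x ∈ Finset.HasAntidiagonal.antidiagonal r → x ≠ (i₀, j₀) →
      (p : ℤ) ^ (M + 1) ∣ g.coeff x.1 * h.coeff x.2 := by
    rintro ⟨i, j⟩ hx hne
    have hij : i + j = r := Finset.HasAntidiagonal.mem_antidiagonal.mp hx
    rcases eq_or_ne (g.coeff i) 0 with hgi | hgi
    · simp [hgi]
    rcases eq_or_ne (h.coeff j) 0 with hhj | hhj
    · simp [hhj]
    have his : i ∈ g.support := mem_support_iff.mpr hgi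
    have hjs : j ∈ h.support := mem_support_iff.mpr hhj
    have hlt : valg i₀ + valh j₀ < valg i + valh j := by
      rcases Nat.lt_or_ge i i₀ with hi | hi
      · exact Nat.add_lt_add_of_lt_of_le (hi₀str i his hi) (hj₀min j hjs)
      · have : j < j₀ := by
          rcases Nat.lt_or_eq_of_le hi with h' | h'
          · omega
          · exfalso; apply hne; subst h'; simp at hij ⊢; omega
        exact Nat.add_lt_add_of_le_of_lt (hi₀min i his) (hj₀str j hjs this)
    have hval : M + 1 ≤ v (g.coeff i) + v (h.coeff j) := by
      have h1 : valg i₀ + valh j₀ = n * M + k * r := by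
        simp only [hvalg, hvalh, hM, hr]; ring
      have h2 : valg i + valh j = n * (v (g.coeff i) + v (h.coeff j)) + k * r := by
        simp only [hvalg, hvalh]; rw [← hij]; ring
      rw [h1, h2] at hlt
      have : n * M < n * (v (g.coeff i) + v (h.coeff j)) := by omega
      have := Nat.lt_of_mul_lt_mul_left this
      omega
    rw [hdvd_iff _ _ (mul_ne_zero hgi hhj),
      show v (g.coeff i * h.coeff j) = v (g.coeff i) + v (h.coeff j) from
        padicValInt.mul hgi hhj]
    exact hval
  have hcoeffr : f.coeff r = ∑ x ∈ Finset.HasAntidiagonal.antidiagonal r, g.coeff x.1 * h.coeff x.2 := by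
    rw [hf, coeff_mul]
  have hmem : (i₀, j₀) ∈ Finset.HasAntidiagonal.antidiagonal r := Finset.HasAntidiagonal.mem_antidiagonal.mpr rfl
  have hsplit : f.coeff r = g.coeff i₀ * h.coeff j₀ +
      ∑ x ∈ (Finset.HasAntidiagonal.antidiagonal r).erase (i₀, j₀), g.coeff x.1 * h.coeff x.2 := by
    rw [hcoeffr]; exact (Finset.add_sum_erase _ _ hmem).symm
  have hrest : (p : ℤ) ^ (M + 1) ∣
      ∑ x ∈ (Finset.HasAntidiagonal.antidiagonal r).erase (i₀, j₀), g.coeff x.1 * h.coeff x.2 :=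
    Finset.dvd_sum fun x hx =>
      hterm x (Finset.mem_of_mem_erase hx) (Finset.ne_of_mem_erase hx)
  have hfr_ndvd : ¬ (p : ℤ) ^ (M + 1) ∣ f.coeff r := by
    rw [hsplit]
    intro hc
    exact hmain_ndvd (by simpa using dvd_sub hc hrest)
  have hfr_dvd : (p : ℤ) ^ M ∣ f.coeff r := by
    rw [hsplit]
    exact dvd_add ((hdvd_iff _ _ (mul_ne_zero hgi₀ hhj₀)).mpr (le_of_eq hmulM.symm))
      ((pow_dvd_pow _ (Nat.le_succ M)).trans hrest)
  have hfr0 : f.coeff r ≠ 0 := fun hc => hfr_ndvd (hc ▸ dvd_zero _)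
  have hrn : r ≤ n := le_natDegree_of_ne_zero hfr0
  -- bounds from leading coefficients
  have hgd : g.coeff d = g.leadingCoeff := rfl
  have hhe : h.coeff e = h.leadingCoeff := rfl
  have hds : d ∈ g.support := mem_support_iff.mpr (hgd ▸ leadingCoeff_ne_zero.mpr hg0)
  have hes : e ∈ h.support := mem_support_iff.mpr (hhe ▸ leadingCoeff_ne_zero.mpr hh0)
  have hvalgd : valg d = k * d := by simp only [hvalg, hgd, hvg, Nat.mul_zero, Nat.zero_add]
  have hvalhe : valh e = k * e := by simp only [hvalh, hhe, hvh, Nat.mul_zero, Nat.zero_add]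
  have hμg : valg i₀ ≤ k * d := hvalgd ▸ hi₀min d hds
  have hμh : valh j₀ ≤ k * e := hvalhe ▸ hj₀min e hes
  have hkey : valg i₀ + valh j₀ = n * M + k * r := by
    simp only [hvalg, hvalh, hM, hr]; ring
  have h0s : (0 : ℕ) ∈ g.support := mem_support_iff.mpr hg00
  have h0s' : (0 : ℕ) ∈ h.support := mem_support_iff.mpr hh00
  have hv0 : v (f.coeff 0) = v (g.coeff 0) + v (h.coeff 0) := by
    rw [ha0']; exact padicValInt.mul hg00 hh00
  have hv0k : v (f.coeff 0) = k := by
    have h1 : k ≤ v (f.coeff 0) := (hdvd_iff _ _ ha0).mp (hdvd 0 hn)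
    have h2 : ¬ (k + 1 ≤ v (f.coeff 0)) := fun hc => h0 ((hdvd_iff _ _ ha0).mpr hc)
    omega
  -- in all cases, n * v (g.coeff 0) = k * d
  have hfin : n * v (g.coeff 0) = k * d := by
    rcases Nat.lt_or_ge r n with hrlt | hrge
    · -- r < n : the minimal coefficient is among the low ones, forcing r = 0
      have hvfr : v (f.coeff r) = M := by
        have h1 : M ≤ v (f.coeff r) := (hdvd_iff _ _ hfr0).mp hfr_dvd
        have h2 : ¬ (M + 1 ≤ v (f.coeff r)) := fun hc => hfr_ndvd ((hdvd_iff _ _ hfr0).mpr hc)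
        omega
      have hMk : k ≤ M := by
        have := (hdvd_iff _ _ hfr0).mp (hdvd r hrlt)
        omega
      have hsum : n * M + k * r ≤ k * n := by
        calc n * M + k * r = valg i₀ + valh j₀ := hkey.symm
        _ ≤ k * d + k * e := Nat.add_le_add hμg hμh
        _ = k * n := by rw [← hde]; ring
      have h5 : n * k ≤ n * M := Nat.mul_le_mul_left n hMk
      have h6 : k * n = n * k := Nat.mul_comm k n
      have h7 : k * r = 0 := by omega
      have hr0 : r = 0 := by
        rcases Nat.mul_eq_zero.mp h7 with hz | hz
        · omega
        · exact hz
      have hi00 : i₀ = 0 := by omega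
      have hj00 : j₀ = 0 := by omega
      have hMek : M = k := by
        have h8 : n * M ≤ n * k := by omega
        have := Nat.le_of_mul_le_mul_left h8 hnpos
        omega
      have h1 : valg i₀ = n * v (g.coeff 0) := by
        simp [hvalg, hi00]
      have h2 : valh j₀ = n * v (h.coeff 0) := by
        simp [hvalh, hj00]
      have h3 : valg i₀ + valh j₀ = k * n := by
        rw [hkey, hr0, hMek]; ring
      have h4 : k * d + k * e = k * n := by rw [← hde]; ring
      omega
    · -- r = n : minima at leading coefficients
      have hrin : r = n := le_antisymm hrn hrge
      have hi0d : i₀ ≤ d := le_natDegree_of_ne_zero hgi₀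
      have hj0e : j₀ ≤ e := le_natDegree_of_ne_zero hhj₀
      have hi0 : i₀ = d := by omega
      have hj0 : j₀ = e := by omega
      have hg0b : k * d ≤ n * v (g.coeff 0) := by
        have := hi₀min 0 h0s
        rw [hi0, hvalgd] at this
        simpa [hvalg] using this
      have hh0b : k * e ≤ n * v (h.coeff 0) := by
        have := hj₀min 0 h0s'
        rw [hj0, hvalhe] at this
        simpa [hvalh] using this
      have hsum : n * v (g.coeff 0) + n * v (h.coeff 0) = k * n := by
        have hvv : v (g.coeff 0) + v (h.coeff 0) = k := by omega
        rw [← Nat.mul_add, hvv, Nat.mul_comm]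
      have h4 : k * d + k * e = k * n := by rw [← hde]; ring
      omega
  -- conclude: n ∣ d, impossible since 0 < d < n
  have hdvdn : n ∣ k * d := ⟨v (g.coeff 0), hfin.symm⟩
  have hcop : Nat.Coprime n k := Nat.coprime_comm.mp hgcd
  have : n ∣ d := hcop.dvd_of_dvd_mul_left hdvdn
  have : n ≤ d := Nat.le_of_dvd hdpos this
  omega
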